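/- (Kernel score identity for Laplace smoothing.) Let τ > 0 and let μ be a probability measure on ℝ^D. Define μ_{k_τ}(x) = E_{y∼μ}[exp(−‖x−y‖₂/τ)]. Then: (i) μ_{k_τ} is (1/τ)-Lipschitz on ℝ^D, and hence differentiable Lebesgue-almost everywhere; (ii) at every point x where μ_{k_τ} is differentiable, ∇μ_{k_τ}(x) = E_{y∼μ}[∇_x k_τ(x,y)], where ∇_x k_τ(x,y) = −(1/τ) exp(−‖x−y‖₂/τ)·(x−y)/‖x−y‖₂ for x ≠ y and is set to 0 on the diagonal x = y; and (iii) if moreover μ_{k_τ}(x) > 0, the kernel-induced score satisfies s_{μ,τ}(x) = ∇ log μ_{k_τ}(x) = ∇μ_{k_τ}(x)/μ_{k_τ}(x). -/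

import Mathlib

open MeasureTheory

/-- The Laplace kernel with bandwidth `τ`: `k_τ(x,y) = exp(−‖x−y‖₂/τ)`. -/
noncomputable def laplaceKernel (D : ℕ) (τ : ℝ) (x y : EuclideanSpace ℝ (Fin D)) : ℝ :=
  Real.exp (-‖x - y‖ / τ)

/-- The kernel-smoothed profile `μ_{k_τ}(x) = E_{y∼μ}[exp(−‖x−y‖₂/τ)]`. -/
noncomputable def smoothedProfile {D : ℕ} (τ : ℝ)
    (μ : Measure (EuclideanSpace ℝ (Fin D))) (x : EuclideanSpace ℝ (Fin D)) : ℝ :=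
  ∫ y, laplaceKernel D τ x y ∂μ

/-- The pointwise gradient `∇_x k_τ(x,y)` of the Laplace kernel:
`−(1/τ) exp(−‖x−y‖/τ)(x−y)/‖x−y‖` for `x ≠ y`, set to `0` on the diagonal. -/
noncomputable def laplaceGradKernel (D : ℕ) (τ : ℝ)
    (x y : EuclideanSpace ℝ (Fin D)) : EuclideanSpace ℝ (Fin D) :=
  letI := Classical.dec (x = y)
  if x = y then 0
  else (-(1 / τ) * Real.exp (-‖x - y‖ / τ) / ‖x - y‖) • (x - y)

open Filter Topology
open scoped Classical NNReal

lemma LSS_exp_side {a b : ℝ} (ha : 0 ≤ a) (h : a ≤ b) :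
    Real.exp (-a) - Real.exp (-b) ≤ b - a := by
  have h1 : Real.exp (-a) ≤ 1 := Real.exp_le_one_iff.mpr (by linarith)
  have h2 : (a - b) + 1 ≤ Real.exp (a - b) := Real.add_one_le_exp _
  have h3 : Real.exp (-b) = Real.exp (-a) * Real.exp (a - b) := by
    rw [← Real.exp_add]; ring_nf
  have h4 : (0:ℝ) < Real.exp (-a) := Real.exp_pos _
  nlinarith [mul_le_mul_of_nonneg_left h2 h4.le]

lemma LSS_exp_lip {a b : ℝ} (ha : 0 ≤ a) (hb : 0 ≤ b) :
    |Real.exp (-a) - Real.exp (-b)| ≤ |a - b| := by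
  rcases le_total a b with h | h
  · have h0 := LSS_exp_side ha h
    have hm : Real.exp (-b) ≤ Real.exp (-a) := Real.exp_le_exp.mpr (by linarith)
    rw [abs_of_nonneg (by linarith), abs_of_nonpos (by linarith)]; linarith
  · have h0 := LSS_exp_side hb h
    have hm : Real.exp (-a) ≤ Real.exp (-b) := Real.exp_le_exp.mpr (by linarith)
    rw [abs_of_nonpos (by linarith), abs_of_nonneg (by linarith)]; linarith

lemma LSS_kernel_lip {D : ℕ} {τ : ℝ} (hτ : 0 < τ) (x x' y : EuclideanSpace ℝ (Fin D)) :
    |laplaceKernel D τ x y - laplaceKernel D τ x' y| ≤ ‖x - x'‖ / τ := by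
  unfold laplaceKernel
  have e1 : -‖x - y‖ / τ = -(‖x - y‖ / τ) := by ring
  have e2 : -‖x' - y‖ / τ = -(‖x' - y‖ / τ) := by ring
  rw [e1, e2]
  refine (LSS_exp_lip (div_nonneg (norm_nonneg _) hτ.le)
    (div_nonneg (norm_nonneg _) hτ.le)).trans ?_
  rw [div_sub_div_same, abs_div, abs_of_pos hτ]
  gcongr
  calc |‖x - y‖ - ‖x' - y‖| ≤ ‖(x - y) - (x' - y)‖ := abs_norm_sub_norm_le _ _
    _ = ‖x - x'‖ := by rw [sub_sub_sub_cancel_right]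

lemma LSS_integrable_kernel {D : ℕ} {τ : ℝ} (hτ : 0 < τ)
    (μ : Measure (EuclideanSpace ℝ (Fin D))) [IsProbabilityMeasure μ]
    (x : EuclideanSpace ℝ (Fin D)) :
    Integrable (fun y => laplaceKernel D τ x y) μ := by
  refine (integrable_const (1:ℝ)).mono' ?_ ?_
  · have : Continuous fun y : EuclideanSpace ℝ (Fin D) => laplaceKernel D τ x y := by
      unfold laplaceKernel
      exact Real.continuous_exp.comp ((continuous_const.sub continuous_id).norm.neg.div_const τ)
    exact this.aestronglyMeasurable
  · refine ae_of_all _ fun y => ?_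
    unfold laplaceKernel
    rw [Real.norm_eq_abs, abs_of_pos (Real.exp_pos _)]
    apply Real.exp_le_one_iff.mpr
    apply div_nonpos_of_nonpos_of_nonneg (neg_nonpos_of_nonneg (norm_nonneg _)) hτ.le

lemma LSS_gradKernel_eq {D : ℕ} (τ : ℝ) (x y : EuclideanSpace ℝ (Fin D)) :
    laplaceGradKernel D τ x y
      = (-(1 / τ) * Real.exp (-‖x - y‖ / τ) / ‖x - y‖) • (x - y) := by
  by_cases h : x = y
  · simp [laplaceGradKernel, h]
  · simp [laplaceGradKernel, h]

lemma LSS_gradKernel_norm_le {D : ℕ} {τ : ℝ} (hτ : 0 < τ) (x y : EuclideanSpace ℝ (Fin D)) :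
    ‖laplaceGradKernel D τ x y‖ ≤ 1 / τ := by
  rw [LSS_gradKernel_eq, norm_smul]
  rcases eq_or_ne x y with h | h
  · simp [h]
    positivity
  · have hn : (0:ℝ) < ‖x - y‖ := norm_sub_pos_iff.mpr h
    have he : (0:ℝ) < Real.exp (-‖x - y‖ / τ) := Real.exp_pos _
    have h1 : -(1 / τ) * Real.exp (-‖x - y‖ / τ) / ‖x - y‖
        = -(1 / τ * Real.exp (-‖x - y‖ / τ) / ‖x - y‖) := by ring
    rw [Real.norm_eq_abs, h1, abs_neg, abs_of_nonneg (by positivity)]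
    rw [div_mul_cancel₀ _ hn.ne']
    have he1 : Real.exp (-‖x - y‖ / τ) ≤ 1 := by
      apply Real.exp_le_one_iff.mpr
      apply div_nonpos_of_nonpos_of_nonneg (neg_nonpos_of_nonneg (norm_nonneg _)) hτ.le
    have h2 : (0:ℝ) < 1 / τ := by positivity
    nlinarith

lemma LSS_meas_grad {D : ℕ} (τ : ℝ) (x : EuclideanSpace ℝ (Fin D)) :
    Measurable fun y => laplaceGradKernel D τ x y := by
  have h : (fun y => laplaceGradKernel D τ x y)
      = fun y : EuclideanSpace ℝ (Fin D) =>
        (-(1 / τ) * Real.exp (-‖x - y‖ / τ) / ‖x - y‖) • (x - y) :=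
    funext fun y => LSS_gradKernel_eq τ x y
  rw [h]
  have h1 : Measurable fun y : EuclideanSpace ℝ (Fin D) => ‖x - y‖ :=
    (continuous_const.sub continuous_id).norm.measurable
  exact ((measurable_const.mul
      (Real.continuous_exp.measurable.comp (h1.neg.div_const τ))).div h1).smul
    (continuous_const.sub continuous_id).measurable

lemma LSS_int_grad {D : ℕ} {τ : ℝ} (hτ : 0 < τ)
    (μ : Measure (EuclideanSpace ℝ (Fin D))) [IsProbabilityMeasure μ]
    (x : EuclideanSpace ℝ (Fin D)) :
    Integrable (fun y => laplaceGradKernel D τ x y) μ :=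
  (integrable_const (1/τ)).mono' (LSS_meas_grad τ x).aestronglyMeasurable
    (ae_of_all _ fun y => LSS_gradKernel_norm_le hτ x y)

lemma LSS_int_if {D : ℕ} {τ : ℝ} (hτ : 0 < τ)
    (μ : Measure (EuclideanSpace ℝ (Fin D))) [IsProbabilityMeasure μ]
    (x v : EuclideanSpace ℝ (Fin D)) (av : ℝ) (hav : |av| ≤ ‖v‖ / τ) :
    Integrable (fun y => (if y = x then av
      else (inner ℝ (laplaceGradKernel D τ x y) v : ℝ))) μ := by
  refine (integrable_const (‖v‖ / τ)).mono' ?_ ?_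
  · apply Measurable.aestronglyMeasurable
    exact Measurable.ite (measurableSet_eq) measurable_const
      ((LSS_meas_grad τ x).inner measurable_const)
  · refine ae_of_all _ fun y => ?_
    by_cases hy : y = x
    · simpa [hy] using hav
    · rw [if_neg hy, Real.norm_eq_abs]
      calc |(inner ℝ (laplaceGradKernel D τ x y) v : ℝ)|
          ≤ ‖laplaceGradKernel D τ x y‖ * ‖v‖ := abs_real_inner_le_norm _ _
        _ ≤ (1/τ) * ‖v‖ :=
            mul_le_mul_of_nonneg_right (LSS_gradKernel_norm_le hτ x y) (norm_nonneg v)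
        _ = ‖v‖ / τ := by ring

lemma LSS_hasDerivAt_off {D : ℕ} {τ : ℝ} (hτ : 0 < τ) {w : EuclideanSpace ℝ (Fin D)}
    (hw : w ≠ 0) (v : EuclideanSpace ℝ (Fin D)) :
    HasDerivAt (fun t : ℝ => Real.exp (-‖w + t • v‖ / τ))
      ((-(1 / τ) * Real.exp (-‖w‖ / τ) / ‖w‖) * (inner ℝ w v : ℝ)) 0 := by
  have hwn : (0:ℝ) < ‖w‖ := norm_pos_iff.mpr hw
  have h1 : HasDerivAt (fun t : ℝ => (inner ℝ (w + t • v) (w + t • v) : ℝ))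
      (2 * (inner ℝ w v : ℝ)) 0 := by
    have ha : HasDerivAt (fun t : ℝ => (2 * (inner ℝ w v : ℝ)) * t) (2 * (inner ℝ w v : ℝ)) 0 := by
      simpa using (hasDerivAt_id (0:ℝ)).const_mul (2 * (inner ℝ w v : ℝ))
    have hb : HasDerivAt (fun t : ℝ => (inner ℝ v v : ℝ) * t ^ 2) 0 0 := by
      simpa using ((hasDerivAt_pow 2 (0:ℝ)).const_mul (inner ℝ v v : ℝ))
    have hp := ((hasDerivAt_const (0:ℝ) (inner ℝ w w : ℝ)).add ha).add hb
    have hfe : (fun t : ℝ => (inner ℝ (w + t • v) (w + t • v) : ℝ))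
        = fun t : ℝ => ((inner ℝ w w : ℝ) + (2 * (inner ℝ w v : ℝ)) * t) + (inner ℝ v v : ℝ) * t ^ 2 := by
      funext t
      rw [real_inner_add_add_self, real_inner_smul_right, real_inner_smul_left,
        real_inner_smul_right]
      ring
    rw [hfe]
    exact hp.congr_deriv (by ring)
  have hs0 : (inner ℝ (w + (0:ℝ) • v) (w + (0:ℝ) • v) : ℝ) = ‖w‖ ^ 2 := by
    rw [zero_smul, add_zero, real_inner_self_eq_norm_sq]
  have hg : HasDerivAt Real.sqrt (1 / (2 * ‖w‖))
      ((inner ℝ (w + (0:ℝ) • v) (w + (0:ℝ) • v) : ℝ)) := by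
    rw [hs0]
    have := Real.hasDerivAt_sqrt (by positivity : (‖w‖ ^ 2 : ℝ) ≠ 0)
    simpa [Real.sqrt_sq (norm_nonneg w)] using this
  have h2 : HasDerivAt (fun t : ℝ => Real.sqrt (inner ℝ (w + t • v) (w + t • v) : ℝ))
      (1 / (2 * ‖w‖) * (2 * (inner ℝ w v : ℝ))) 0 := by
    simpa [Function.comp_def] using hg.comp 0 h1
  have h3 : HasDerivAt (fun t : ℝ => ‖w + t • v‖) (1 / (2 * ‖w‖) * (2 * (inner ℝ w v : ℝ))) 0 := by
    have hfe : (fun t : ℝ => Real.sqrt (inner ℝ (w + t • v) (w + t • v) : ℝ))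
        = fun t : ℝ => ‖w + t • v‖ := by
      funext t; rw [real_inner_self_eq_norm_sq, Real.sqrt_sq (norm_nonneg _)]
    rwa [hfe] at h2
  have h4 : HasDerivAt (fun s : ℝ => Real.exp (-s / τ))
      (Real.exp (-‖w‖ / τ) * (-1 / τ)) ((fun t : ℝ => ‖w + t • v‖) 0) := by
    have hl : HasDerivAt (fun s : ℝ => -s / τ) (-1 / τ) ‖w‖ := by
      simpa using ((hasDerivAt_id ‖w‖).neg.div_const τ)
    have := (Real.hasDerivAt_exp (-‖w‖ / τ)).comp ‖w‖ hl
    simp only [Function.comp_def] at this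
    simpa using this
  have h5 := h4.comp 0 h3
  simp only [Function.comp_def] at h5
  refine h5.congr_deriv ?_
  ring

lemma LSS_side {D : ℕ} {τ : ℝ} (hτ : 0 < τ)
    (μ : Measure (EuclideanSpace ℝ (Fin D))) [IsProbabilityMeasure μ]
    (x v : EuclideanSpace ℝ (Fin D)) (hd : DifferentiableAt ℝ (smoothedProfile τ μ) x)
    (l : Filter ℝ) [l.NeBot] [l.IsCountablyGenerated] (hl : l ≤ 𝓝[≠] (0:ℝ))
    (av : ℝ)
    (hav : Tendsto (fun t : ℝ => (laplaceKernel D τ (x + t • v) x - 1) / t) l (𝓝 av)) :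
    fderiv ℝ (smoothedProfile τ μ) x v
      = ∫ y, (if y = x then av else (inner ℝ (laplaceGradKernel D τ x y) v : ℝ)) ∂μ := by
  set q : ℝ → EuclideanSpace ℝ (Fin D) → ℝ :=
    fun t y => (laplaceKernel D τ (x + t • v) y - laplaceKernel D τ x y) / t with hq
  have hv : HasDerivAt (fun t : ℝ => x + t • v) v 0 := by
    simpa using ((hasDerivAt_id (0:ℝ)).smul_const v).const_add x
  have h0 : HasFDerivAt (smoothedProfile τ μ) (fderiv ℝ (smoothedProfile τ μ) x)
      (x + (0:ℝ) • v) := by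
    simpa using hd.hasFDerivAt
  have hline : HasDerivAt (fun t : ℝ => smoothedProfile τ μ (x + t • v))
      (fderiv ℝ (smoothedProfile τ μ) x v) 0 := by
    have := h0.comp_hasDerivAt 0 hv; exact this
  have hslope : Tendsto (fun t : ℝ => (smoothedProfile τ μ (x + t • v) - smoothedProfile τ μ x) / t)
      l (𝓝 (fderiv ℝ (smoothedProfile τ μ) x v)) := by
    have h := (hasDerivAt_iff_tendsto_slope.mp hline).mono_left hl
    refine h.congr fun t => ?_
    rw [slope_def_field]
    simp
  have hki : ∀ z, Integrable (fun y => laplaceKernel D τ z y) μ :=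
    fun z => LSS_integrable_kernel hτ μ z
  have hqint : ∀ t : ℝ, (∫ y, q t y ∂μ)
      = (smoothedProfile τ μ (x + t • v) - smoothedProfile τ μ x) / t := by
    intro t
    simp only [hq]
    rw [integral_div, integral_sub (hki _) (hki _)]
    rfl
  have hIl : Tendsto (fun t : ℝ => ∫ y, q t y ∂μ) l
      (𝓝 (fderiv ℝ (smoothedProfile τ μ) x v)) :=
    hslope.congr fun t => (hqint t).symm
  have hDCT : Tendsto (fun t : ℝ => ∫ y, q t y ∂μ) l
      (𝓝 (∫ y, (if y = x then av else (inner ℝ (laplaceGradKernel D τ x y) v : ℝ)) ∂μ)) := by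
    apply tendsto_integral_filter_of_dominated_convergence (fun _ => ‖v‖ / τ)
    · refine Filter.Eventually.of_forall fun t => ?_
      have hc : ∀ z : EuclideanSpace ℝ (Fin D), Continuous fun y => laplaceKernel D τ z y := by
        intro z
        unfold laplaceKernel
        exact Real.continuous_exp.comp ((continuous_const.sub continuous_id).norm.neg.div_const τ)
      exact (((hc _).sub (hc _)).div_const t).aestronglyMeasurable
    · refine Filter.Eventually.of_forall fun t => ae_of_all _ fun y => ?_
      simp only [hq]
      rcases eq_or_ne t 0 with rfl | ht
      · simp
        positivity
      · rw [Real.norm_eq_abs, abs_div]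
        have hlip := LSS_kernel_lip hτ (x + t • v) x y
        have hxx : ‖(x + t • v) - x‖ = |t| * ‖v‖ := by
          rw [add_sub_cancel_left, norm_smul, Real.norm_eq_abs]
        have h2 : |laplaceKernel D τ (x + t • v) y - laplaceKernel D τ x y| / |t|
            ≤ (|t| * ‖v‖ / τ) / |t| := by
          gcongr
          rw [← hxx]; exact hlip
        refine h2.trans_eq ?_
        field_simp
    · exact integrable_const _
    · refine ae_of_all _ fun y => ?_
      by_cases hy : y = x
      · subst hy
        rw [if_pos rfl]
        refine hav.congr fun t => ?_
        simp only [hq]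
        congr 2
        unfold laplaceKernel
        simp
      · rw [if_neg hy]
        have hw : x - y ≠ 0 := sub_ne_zero.mpr (Ne.symm hy)
        have hder := LSS_hasDerivAt_off hτ hw v
        have h := (hasDerivAt_iff_tendsto_slope.mp hder).mono_left hl
        have hval : (-(1 / τ) * Real.exp (-‖x - y‖ / τ) / ‖x - y‖) * (inner ℝ (x - y) v : ℝ)
            = (inner ℝ (laplaceGradKernel D τ x y) v : ℝ) := by
          rw [LSS_gradKernel_eq, real_inner_smul_left]
        rw [← hval]
        refine h.congr fun t => ?_
        rw [slope_def_field]
        simp only [hq]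
        unfold laplaceKernel
        rw [add_sub_right_comm x (t • v) y]
        simp
  exact tendsto_nhds_unique hIl hDCT

lemma LSS_fderiv_apply {D : ℕ} {τ : ℝ} (hτ : 0 < τ)
    (μ : Measure (EuclideanSpace ℝ (Fin D))) [IsProbabilityMeasure μ]
    (x : EuclideanSpace ℝ (Fin D)) (hd : DifferentiableAt ℝ (smoothedProfile τ μ) x)
    (v : EuclideanSpace ℝ (Fin D)) :
    fderiv ℝ (smoothedProfile τ μ) x v
      = ∫ y, (inner ℝ (laplaceGradKernel D τ x y) v : ℝ) ∂μ := by
  have hb1 : |(-(‖v‖ / τ) : ℝ)| ≤ ‖v‖ / τ := by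
    rw [abs_neg, abs_of_nonneg (by positivity)]
  have hb2 : |(‖v‖ / τ : ℝ)| ≤ ‖v‖ / τ := by rw [abs_of_nonneg (by positivity)]
  -- right limit at the atom
  have havR : Tendsto (fun t : ℝ => (laplaceKernel D τ (x + t • v) x - 1) / t) (𝓝[>] (0:ℝ))
      (𝓝 (-(‖v‖ / τ))) := by
    have hlin : HasDerivAt (fun t : ℝ => -(t * ‖v‖) / τ) (-(‖v‖ / τ)) 0 := by
      simpa [neg_div] using (((hasDerivAt_id (0:ℝ)).mul_const ‖v‖).neg.div_const τ)
    have hρ : HasDerivAt (fun t : ℝ => Real.exp (-(t * ‖v‖) / τ)) (-(‖v‖ / τ)) 0 := by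
      have h := (Real.hasDerivAt_exp (-(0 * ‖v‖) / τ)).comp 0 hlin
      simp only [Function.comp_def] at h
      simpa using h
    have h := (hasDerivAt_iff_tendsto_slope.mp hρ).mono_left
      (nhdsWithin_mono 0 fun t ht => ne_of_gt ht)
    refine h.congr' ?_
    filter_upwards [eventually_mem_nhdsWithin] with t ht
    rw [slope_def_field]
    unfold laplaceKernel
    rw [add_sub_cancel_left, norm_smul, Real.norm_eq_abs, abs_of_pos ht]
    simp
  -- left limit at the atom
  have havL : Tendsto (fun t : ℝ => (laplaceKernel D τ (x + t • v) x - 1) / t) (𝓝[<] (0:ℝ))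
      (𝓝 (‖v‖ / τ)) := by
    have hlin : HasDerivAt (fun t : ℝ => (t * ‖v‖) / τ) (‖v‖ / τ) 0 := by
      simpa using (((hasDerivAt_id (0:ℝ)).mul_const ‖v‖).div_const τ)
    have hρ : HasDerivAt (fun t : ℝ => Real.exp ((t * ‖v‖) / τ)) (‖v‖ / τ) 0 := by
      have h := (Real.hasDerivAt_exp ((0 * ‖v‖) / τ)).comp 0 hlin
      simp only [Function.comp_def] at h
      simpa using h
    have h := (hasDerivAt_iff_tendsto_slope.mp hρ).mono_left
      (nhdsWithin_mono 0 fun t ht => ne_of_lt ht)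
    refine h.congr' ?_
    filter_upwards [eventually_mem_nhdsWithin] with t ht
    rw [slope_def_field]
    unfold laplaceKernel
    rw [add_sub_cancel_left, norm_smul, Real.norm_eq_abs, abs_of_neg ht]
    have he : -(-t * ‖v‖) / τ = t * ‖v‖ / τ := by ring
    rw [he]
    simp
  have hR := LSS_side hτ μ x v hd (𝓝[>] (0:ℝ))
    (nhdsWithin_mono 0 fun t ht => ne_of_gt ht) _ havR
  have hL := LSS_side hτ μ x v hd (𝓝[<] (0:ℝ))
    (nhdsWithin_mono 0 fun t ht => ne_of_lt ht) _ havL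
  have hiR := LSS_int_if hτ μ x v _ hb1
  have hiL := LSS_int_if hτ μ x v _ hb2
  have hadd := integral_add hiR hiL
  have hsum : ∀ y, ((if y = x then -(‖v‖ / τ) else (inner ℝ (laplaceGradKernel D τ x y) v : ℝ))
        + (if y = x then (‖v‖ / τ) else (inner ℝ (laplaceGradKernel D τ x y) v : ℝ)))
      = 2 * (inner ℝ (laplaceGradKernel D τ x y) v : ℝ) := by
    intro y
    by_cases hy : y = x
    · subst hy
      rw [if_pos rfl, if_pos rfl]
      have : laplaceGradKernel D τ y y = 0 := by simp [laplaceGradKernel]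
      rw [this, inner_zero_left]
      ring
    · rw [if_neg hy, if_neg hy]; ring
  have key : 2 * fderiv ℝ (smoothedProfile τ μ) x v
      = 2 * ∫ y, (inner ℝ (laplaceGradKernel D τ x y) v : ℝ) ∂μ := by
    calc 2 * fderiv ℝ (smoothedProfile τ μ) x v
        = (∫ y, (if y = x then -(‖v‖ / τ) else (inner ℝ (laplaceGradKernel D τ x y) v : ℝ)) ∂μ)
          + ∫ y, (if y = x then (‖v‖ / τ) else (inner ℝ (laplaceGradKernel D τ x y) v : ℝ)) ∂μ := by
          rw [← hR, ← hL]; ring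
      _ = ∫ y, ((if y = x then -(‖v‖ / τ) else (inner ℝ (laplaceGradKernel D τ x y) v : ℝ))
            + (if y = x then (‖v‖ / τ) else (inner ℝ (laplaceGradKernel D τ x y) v : ℝ))) ∂μ :=
          hadd.symm
      _ = ∫ y, 2 * (inner ℝ (laplaceGradKernel D τ x y) v : ℝ) ∂μ :=
          integral_congr_ae (ae_of_all _ hsum)
      _ = 2 * ∫ y, (inner ℝ (laplaceGradKernel D τ x y) v : ℝ) ∂μ := integral_const_mul _ _
  linarith

/-- Kernel score identity for Laplace smoothing.
For `τ > 0` and a probability measure `μ` on `ℝ^D`: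
(i) `μ_{k_τ}` is `(1/τ)`-Lipschitz, hence differentiable Lebesgue-a.e.;
(ii) wherever `μ_{k_τ}` is differentiable, `∇μ_{k_τ}(x) = E_{y∼μ}[∇_x k_τ(x,y)]`;
(iii) if moreover `μ_{k_τ}(x) > 0`, then
`s_{μ,τ}(x) = ∇ log μ_{k_τ}(x) = ∇μ_{k_τ}(x)/μ_{k_τ}(x)`. -/
theorem laplace_smoothing_score_identity {D : ℕ} (τ : ℝ) (hτ : 0 < τ)
    (μ : Measure (EuclideanSpace ℝ (Fin D))) [IsProbabilityMeasure μ] :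
    LipschitzWith (Real.toNNReal (1 / τ)) (smoothedProfile τ μ)
    ∧
    (∀ᵐ x : EuclideanSpace ℝ (Fin D), DifferentiableAt ℝ (smoothedProfile τ μ) x)
    ∧
    (∀ x, DifferentiableAt ℝ (smoothedProfile τ μ) x →
      gradient (smoothedProfile τ μ) x = ∫ y, laplaceGradKernel D τ x y ∂μ)
    ∧
    (∀ x, DifferentiableAt ℝ (smoothedProfile τ μ) x → 0 < smoothedProfile τ μ x →
      gradient (fun z => Real.log (smoothedProfile τ μ z)) x
        = (smoothedProfile τ μ x)⁻¹ • gradient (smoothedProfile τ μ) x) := by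
  have hlip : LipschitzWith (Real.toNNReal (1 / τ)) (smoothedProfile τ μ) := by
    apply LipschitzWith.of_dist_le_mul
    intro a b
    have hcoe : ((Real.toNNReal (1 / τ) : ℝ≥0) : ℝ) = 1 / τ :=
      Real.coe_toNNReal _ (by positivity)
    rw [hcoe, Real.dist_eq]
    have hsub : smoothedProfile τ μ a - smoothedProfile τ μ b
        = ∫ y, (laplaceKernel D τ a y - laplaceKernel D τ b y) ∂μ := by
      rw [integral_sub (LSS_integrable_kernel hτ μ a) (LSS_integrable_kernel hτ μ b)]
      rfl
    rw [hsub]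
    have h1 : |∫ y, (laplaceKernel D τ a y - laplaceKernel D τ b y) ∂μ|
        ≤ ∫ y, |laplaceKernel D τ a y - laplaceKernel D τ b y| ∂μ :=
      by simpa [Real.norm_eq_abs] using
        norm_integral_le_integral_norm (μ := μ)
          (fun y => laplaceKernel D τ a y - laplaceKernel D τ b y)
    refine h1.trans ?_
    have h2 : ∫ y, |laplaceKernel D τ a y - laplaceKernel D τ b y| ∂μ
        ≤ ∫ _y, (‖a - b‖ / τ) ∂μ := by
      apply integral_mono
      · exact ((LSS_integrable_kernel hτ μ a).sub (LSS_integrable_kernel hτ μ b)).abs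
      · exact integrable_const _
      · exact fun y => LSS_kernel_lip hτ a b y
    refine h2.trans_eq ?_
    rw [integral_const]
    simp [dist_eq_norm]
    ring
  refine ⟨hlip, hlip.ae_differentiableAt, ?_, ?_⟩
  · intro x hdx
    apply ext_inner_right ℝ
    intro v
    have h1 : (inner ℝ (gradient (smoothedProfile τ μ) x) v : ℝ)
        = fderiv ℝ (smoothedProfile τ μ) x v := InnerProductSpace.toDual_symm_apply
    rw [h1, LSS_fderiv_apply hτ μ x hdx v]
    have h2 : (∫ y, (inner ℝ (laplaceGradKernel D τ x y) v : ℝ) ∂μ)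
        = ∫ y, (inner ℝ v (laplaceGradKernel D τ x y) : ℝ) ∂μ :=
      integral_congr_ae (ae_of_all _ fun y => real_inner_comm _ _)
    rw [h2, integral_inner (LSS_int_grad hτ μ x) v]
    exact real_inner_comm _ _
  · intro x hdx hpos
    have hlog : HasDerivAt Real.log (smoothedProfile τ μ x)⁻¹ (smoothedProfile τ μ x) :=
      Real.hasDerivAt_log (ne_of_gt hpos)
    have hc : HasFDerivAt (fun z => Real.log (smoothedProfile τ μ z))
        ((smoothedProfile τ μ x)⁻¹ • fderiv ℝ (smoothedProfile τ μ) x) x :=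
      hlog.comp_hasFDerivAt x hdx.hasFDerivAt
    show (InnerProductSpace.toDual ℝ _).symm _ = _
    rw [hc.fderiv]
    rw [_root_.map_smul]
    rfl
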